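/- The quantity I = [a₁u₀²u₁² + a₂u₀u₁(u₀+u₁) + a₃(u₀²+u₁²) + a₅(u₀+u₁) + a₆]/(u₀u₁) is invariant under the multiplicative symmetric QRT map: if u₂ satisfies u₂u₀ = (a₃u₁² + a₅u₁ + a₆)/(a₁u₁² + a₂u₁ + a₃) (with u₀, u₁, u₂ and a₁u₁² + a₂u₁ + a₃ all nonzero), then I(u₁, u₂) = I(u₀, u₁). -/

import Mathlib

theorem stmt_13 {K : Type*} [Field K] (a₁ a₂ a₃ a₅ a₆ : K) (u₀ u₁ u₂ : K)
    (h0 : u₀ ≠ 0) (h1 : u₁ ≠ 0) (h2 : u₂ ≠ 0)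
    (hden : a₁ * u₁ ^ 2 + a₂ * u₁ + a₃ ≠ 0)
    (h : u₂ * u₀ = (a₃ * u₁ ^ 2 + a₅ * u₁ + a₆) / (a₁ * u₁ ^ 2 + a₂ * u₁ + a₃)) :
    (a₁ * u₁ ^ 2 * u₂ ^ 2 + a₂ * u₁ * u₂ * (u₁ + u₂) + a₃ * (u₁ ^ 2 + u₂ ^ 2) + a₅ * (u₁ + u₂) + a₆) /
        (u₁ * u₂) =
      (a₁ * u₀ ^ 2 * u₁ ^ 2 + a₂ * u₀ * u₁ * (u₀ + u₁) + a₃ * (u₀ ^ 2 + u₁ ^ 2) + a₅ * (u₀ + u₁) + a₆) /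
        (u₀ * u₁) := by
  rw [div_eq_div_iff (by exact mul_ne_zero h1 h2) (by exact mul_ne_zero h0 h1)]
  have h' : u₂ * u₀ * (a₁ * u₁ ^ 2 + a₂ * u₁ + a₃) = a₃ * u₁ ^ 2 + a₅ * u₁ + a₆ := by
    rw [eq_div_iff hden] at h
    linear_combination h
  linear_combination (u₂ - u₀) * u₁ * h'
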